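/- Let N be a positive integer, let a, d ∈ ℂ^N be unit-modulus vectors, and let n, n' ∈ {0,…,N−1} with n ≠ n'. Then the interference term vanishes: aᴴ · U_n^* · diag(conj(d) ∘ d) · U_{n'}ᵀ · a = 0, where ∘ denotes the entrywise (Hadamard) product. -/

import Mathlib

open Matrix Complex

/-- The normalized `N × N` DFT matrix: `U i j = ω^(i*j) / √N` with `ω = exp(2πi/N)`. -/
noncomputable def dftU (N : ℕ) : Matrix (Fin N) (Fin N) ℂ :=
  fun i j => Complex.exp (2 * Real.pi * Complex.I / (N : ℂ)) ^ (i.val * j.val) / (Real.sqrt N : ℂ)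

/-- The `n`-th circulant-permutation DFT (CP-DFT) matrix:
`U_n i j = U i ((j + n) mod N)`, where addition in `Fin N` is modulo `N`. -/
noncomputable def cpdft (N : ℕ) (n : Fin N) : Matrix (Fin N) (Fin N) ℂ :=
  fun i j => dftU N i (j + n)


/-- for unit-modulus vectors `a, d` and `n ≠ n'` the interference term vanishes:
`aᴴ · U_n^* · diag(conj(d) ∘ d) · U_{n'}ᵀ · a = 0` (here `X^* = (Xᴴ)ᵀ` is the entrywise
conjugate). -/
theorem interference_term_eq_zero (N : ℕ) (hN : 0 < N) (a d : Fin N → ℂ)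
    (ha : ∀ i, ‖a i‖ = 1) (hd : ∀ i, ‖d i‖ = 1)
    (n n' : Fin N) (hnn' : n ≠ n') :
    star a ⬝ᵥ
      ((((cpdft N n)ᴴ)ᵀ *
          Matrix.diagonal (fun m => (starRingEnd ℂ) (d m) * d m) *
          (cpdft N n')ᵀ).mulVec a) = 0 := by
  classical
  set ω : ℂ := Complex.exp (2 * ↑Real.pi * Complex.I / (N : ℂ)) with hωdef
  have hprim : IsPrimitiveRoot ω N := Complex.isPrimitiveRoot_exp N hN.ne'
  have hω0 : ω ≠ 0 := Complex.exp_ne_zero _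
  have hωN : ω ^ N = 1 := hprim.pow_eq_one
  have hNC : (N : ℂ) ≠ 0 := Nat.cast_ne_zero.mpr hN.ne'
  -- geometric sum
  have hgeom : ∀ k : ℤ, ¬ (N:ℤ) ∣ k → ∑ m : Fin N, ω ^ (k * (m.val : ℤ)) = 0 := by
    intro k hk
    have hx1 : ω ^ k ≠ 1 := fun h => hk ((hprim.zpow_eq_one_iff_dvd k).mp h)
    have hxN : (ω ^ k) ^ N = 1 := by
      rw [← zpow_natCast (ω ^ k) N, ← _root_.zpow_mul, mul_comm, _root_.zpow_mul, zpow_natCast, hωN, _root_.one_zpow]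
    have : ∑ m : Fin N, ω ^ (k * (m.val : ℤ)) = ∑ m ∈ Finset.range N, (ω ^ k) ^ m := by
      rw [Finset.sum_range fun m => (ω ^ k) ^ m]
      refine Finset.sum_congr rfl fun m _ => ?_
      rw [_root_.zpow_mul, _root_.zpow_natCast]
    rw [this, geom_sum_eq hx1, hxN, sub_self, zero_div]
  -- non-divisibility
  have hndvd : ∀ i j : Fin N, i ≠ j → ¬ (N:ℤ) ∣ ((j.val:ℤ) - (i.val:ℤ)) := by
    intro i j hij ⟨c, hc⟩
    have hi : i.val < N := i.isLt
    have hj : j.val < N := j.isLt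
    have hc0 : c = 0 := by
      rcases lt_trichotomy c 0 with h | h | h
      · nlinarith [hc, Int.le_sub_one_of_lt h]
      · exact h
      · nlinarith [hc, Int.add_one_le_of_lt h]
    rw [hc0, mul_zero, sub_eq_zero] at hc
    exact hij (Fin.ext (by exact_mod_cast hc.symm))
  -- entries are pure powers of ω
  have hmod : ∀ x : ℕ, ω ^ (x % N) = ω ^ x := by
    intro x
    conv_rhs => rw [← Nat.div_add_mod x N, pow_add, pow_mul, hωN, one_pow, one_mul]
  have hstar : (starRingEnd ℂ) ω = ω⁻¹ := by
    rw [hωdef, ← Complex.exp_conj, ← Complex.exp_neg]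
    congr 1
    simp [map_div₀, Complex.conj_I, map_ofNat]
    ring
  have hsq : (Real.sqrt N : ℂ) * (Real.sqrt N : ℂ) = (N : ℂ) := by
    rw [← Complex.ofReal_mul, Real.mul_self_sqrt (Nat.cast_nonneg N)]
    norm_num
  have hterm : ∀ (i j m : Fin N),
      (starRingEnd ℂ) (cpdft N n i m) * cpdft N n' j m
        = ω ^ (((j.val:ℤ) - (i.val:ℤ)) * (m.val:ℤ)) *
            ω ^ ((j.val:ℤ) * (n'.val:ℤ) - (i.val:ℤ) * (n.val:ℤ)) / N := by
    intro i j m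
    have hv : ∀ (p q : Fin N), ((p + q : Fin N).val) = (p.val + q.val) % N := fun p q => rfl
    simp only [cpdft, dftU, ← hωdef, map_div₀, map_pow, hstar, Complex.conj_ofReal]
    rw [hv, hv]
    rw [div_mul_div_comm, hsq]
    have hmodb : ∀ b : ℂ, b ^ N = 1 → ∀ c x : ℕ, b ^ (c * (x % N)) = b ^ (c * x) := by
      intro b hb c x
      conv_rhs => rw [← Nat.div_add_mod x N, Nat.mul_add, pow_add, Nat.mul_left_comm,
        pow_mul, hb, one_pow, one_mul]
    have hz : ∀ e : ℕ, ω⁻¹ ^ e = ω ^ (-(e:ℤ)) := by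
      intro e
      rw [inv_pow, ← _root_.zpow_natCast ω e, ← _root_.zpow_neg]
    rw [hmodb ω⁻¹ (by rw [inv_pow, hωN, inv_one]) i.val (m.val + n.val),
      hmodb ω hωN j.val (m.val + n'.val), hz,
      ← _root_.zpow_natCast ω (j.val * (m.val + n'.val)),
      ← _root_.zpow_add₀ hω0, ← _root_.zpow_add₀ hω0]
    congr 2
    push_cast
    ring
  have ha1 : ∀ i, (starRingEnd ℂ) (a i) * a i = 1 := by
    intro i
    rw [mul_comm, Complex.mul_conj]
    norm_cast
    rw [Complex.normSq_eq_norm_sq, ha i, one_pow]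
  have hd1 : Matrix.diagonal (fun m => (starRingEnd ℂ) (d m) * d m)
      = (1 : Matrix (Fin N) (Fin N) ℂ) := by
    have h1 : (fun m : Fin N => (starRingEnd ℂ) (d m) * d m) = fun _ => (1:ℂ) := by
      funext m
      rw [mul_comm, Complex.mul_conj]
      norm_cast
      rw [Complex.normSq_eq_norm_sq, hd m, one_pow]
    rw [h1, Matrix.diagonal_one]
  rw [hd1, Matrix.mul_one]
  have hinner : ∀ i j : Fin N,
      (∑ m, (starRingEnd ℂ) (cpdft N n i m) * cpdft N n' j m)
        = if j = i then ω ^ ((i.val:ℤ) * ((n'.val:ℤ) - (n.val:ℤ))) else 0 := by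
    intro i j
    simp_rw [hterm]
    rw [← Finset.sum_div, ← Finset.sum_mul]
    by_cases h : j = i
    · subst h
      simp only [sub_self, zero_mul, zpow_zero, Finset.sum_const, Finset.card_univ,
        Fintype.card_fin, nsmul_eq_mul, mul_one, if_pos rfl]
      rw [mul_div_cancel_left₀ _ hNC]
      congr 1
      ring
    · rw [hgeom _ (hndvd i j (Ne.symm h)), zero_mul, zero_div, if_neg h]
  simp only [dotProduct, Matrix.mulVec, Matrix.mul_apply, Matrix.transpose_apply,
    Matrix.conjTranspose_apply, Pi.star_apply, RCLike.star_def]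
  simp_rw [hinner, ite_mul, zero_mul, Finset.sum_ite_eq' Finset.univ, Finset.mem_univ, if_pos]
  calc ∑ i : Fin N, (starRingEnd ℂ) (a i) * (ω ^ ((i.val:ℤ) * ((n'.val:ℤ) - (n.val:ℤ))) * a i)
      = ∑ i : Fin N, ω ^ (((n'.val:ℤ) - (n.val:ℤ)) * (i.val:ℤ)) := by
        refine Finset.sum_congr rfl fun i _ => ?_
        calc (starRingEnd ℂ) (a i) * (ω ^ ((i.val:ℤ) * ((n'.val:ℤ) - (n.val:ℤ))) * a i)
            = ((starRingEnd ℂ) (a i) * a i) * ω ^ ((i.val:ℤ) * ((n'.val:ℤ) - (n.val:ℤ))) := by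
              ring
          _ = ω ^ (((n'.val:ℤ) - (n.val:ℤ)) * (i.val:ℤ)) := by
              rw [ha1 i, one_mul, mul_comm ((i.val:ℤ)) _]
    _ = 0 := hgeom _ (hndvd n n' hnn')
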